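/- Let b ≥ 2, let E_0, E_1, …, E_k be finite sets of nonnegative integers such that P_{E_0}(X)·P_{E_1}(X)⋯P_{E_k}(X) ≡ 1 + X + ⋯ + X^{b−1} (mod X^b − 1) in ℤ[X], let 0 ≤ l_1 ≤ ⋯ ≤ l_k be integers, and let D be a set of nonnegative integers with P_D(X) = P_{E_0}(X)·P_{E_1}(X^{b^{l_1}})⋯P_{E_k}(X^{b^{l_k}}) (a product-form digit set). Then D satisfies condition (P1) with respect to b, and hence the Kenyon condition with respect to b. -/

import Mathlib

open Polynomial

/-- The mask polynomial `P_A(X) = ∑_{a ∈ A} X^a ∈ ℤ[X]` of a finite set of naturals. -/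
noncomputable def mask (A : Finset ℕ) : Polynomial ℤ := ∑ a ∈ A, X ^ a

/-- The Kenyon condition with respect to `b`. -/
def Kenyon (b : ℕ) (D : Finset ℕ) : Prop :=
  ∀ m : ℕ, 1 ≤ m → ∃ k : ℕ, 1 ≤ k ∧
    Polynomial.aeval (Complex.exp (2 * Real.pi * Complex.I * (m : ℂ) / (b : ℂ) ^ k)) (mask D) = 0

/-- Condition (P1). -/
def CondP1 (b : ℕ) (D : Finset ℕ) : Prop :=
  ∀ d : ℕ, d ∣ b → 1 < d → ∃ j : ℕ, (cyclotomic d ℤ).comp (X ^ b ^ j) ∣ mask D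

/-- Extracting the maximal power of `b` from a positive natural number. -/
lemma exists_pow_mul_not_dvd (b : ℕ) (hb : 2 ≤ b) :
    ∀ m : ℕ, 1 ≤ m → ∃ t m₀ : ℕ, m = b ^ t * m₀ ∧ ¬ b ∣ m₀ := by
  intro m
  induction m using Nat.strong_induction_on with
  | _ m ih =>
    intro hm
    by_cases hdvd : b ∣ m
    · obtain ⟨m', rfl⟩ := hdvd
      have hm' : 1 ≤ m' := Nat.pos_of_ne_zero (fun h => by simp [h] at hm)
      have hlt : m' < b * m' := by nlinarith
      obtain ⟨t, m₀, h1, h2⟩ := ih m' hlt hm'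
      exact ⟨t + 1, m₀, by rw [h1]; ring, h2⟩
    · exact ⟨0, m, by ring, hdvd⟩

lemma dvd_comp {p q r : Polynomial ℤ} (h : p ∣ q) : p.comp r ∣ q.comp r := by
  obtain ⟨s, rfl⟩ := h
  exact ⟨s.comp r, mul_comp p s r⟩

/-- A product-form digit set satisfies (P1), hence the Kenyon condition. -/
theorem stmt4 (b k : ℕ) (hb : 2 ≤ b) (E : ℕ → Finset ℕ)
    (l : ℕ → ℕ) (hl0 : l 0 = 0) (hlmono : ∀ i : ℕ, i < k → l i ≤ l (i + 1))
    (hE : (X ^ b - 1 : Polynomial ℤ) ∣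
      ((∏ i ∈ Finset.range (k + 1), mask (E i)) - ∑ i ∈ Finset.range b, (X : Polynomial ℤ) ^ i))
    (D : Finset ℕ)
    (hD : mask D = ∏ i ∈ Finset.range (k + 1), (mask (E i)).comp (X ^ b ^ l i)) :
    CondP1 b D ∧ Kenyon b D := by
  have hP1 : CondP1 b D := by
    intro d hdb hd1
    have hgeom : cyclotomic d ℤ ∣ ∑ i ∈ Finset.range b, (X : Polynomial ℤ) ^ i :=
      cyclotomic_dvd_geom_sum_of_dvd ℤ hdb (by omega)
    have hxb : cyclotomic d ℤ ∣ (X ^ b - 1 : Polynomial ℤ) :=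
      hgeom.trans ⟨X - 1, (geom_sum_mul X b).symm⟩
    have hprod : cyclotomic d ℤ ∣ ∏ i ∈ Finset.range (k + 1), mask (E i) := by
      have := dvd_add (hxb.trans hE) hgeom
      simpa [sub_add_cancel] using this
    have hprime : Prime (cyclotomic d ℤ) := (cyclotomic.irreducible (by omega)).prime
    obtain ⟨i, hi, hdvd⟩ := hprime.exists_mem_finset_dvd hprod
    refine ⟨l i, ?_⟩
    rw [hD]
    calc (cyclotomic d ℤ).comp (X ^ b ^ l i) ∣ (mask (E i)).comp (X ^ b ^ l i) := dvd_comp hdvd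
      _ ∣ ∏ i ∈ Finset.range (k + 1), (mask (E i)).comp (X ^ b ^ l i) :=
        Finset.dvd_prod_of_mem _ hi
  refine ⟨hP1, ?_⟩
  intro m hm
  obtain ⟨t, m₀, hmeq, hndvd⟩ := exists_pow_mul_not_dvd b hb m hm
  set g := Nat.gcd m₀ b with hg
  obtain ⟨m₁, hm₁⟩ := Nat.gcd_dvd_left m₀ b
  obtain ⟨d, hdg⟩ := Nat.gcd_dvd_right m₀ b
  have hm₀pos : 1 ≤ m₀ := by
    rcases Nat.eq_zero_or_pos m₀ with h | h
    · subst h; omega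
    · exact h
  have hgpos : 0 < g := Nat.gcd_pos_of_pos_right _ (by omega)
  have hdpos : 0 < d := by
    rcases Nat.eq_zero_or_pos d with h | h
    · rw [h, mul_zero] at hdg; omega
    · exact h
  have hd1 : 1 < d := by
    rcases Nat.lt_or_ge 1 d with h | h
    · exact h
    · exfalso
      have hd1' : d = 1 := by omega
      rw [hd1', mul_one] at hdg
      exact hndvd (hdg ▸ Nat.gcd_dvd_left m₀ b)
  have hcop : Nat.Coprime m₁ d := by
    have h1 : g * Nat.gcd m₁ d ∣ g := by
      apply Nat.dvd_gcd
      · rw [hm₁]; exact mul_dvd_mul_left g (Nat.gcd_dvd_left _ _)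
      · rw [hdg]; exact mul_dvd_mul_left g (Nat.gcd_dvd_right _ _)
    have := Nat.le_of_dvd hgpos h1
    have h2 : 0 < Nat.gcd m₁ d := Nat.gcd_pos_of_pos_right _ hdpos
    unfold Nat.Coprime
    nlinarith
  obtain ⟨j, hj⟩ := hP1 d ⟨g, by rw [hdg]; ring⟩ hd1
  refine ⟨j + (t + 1), by omega, ?_⟩
  obtain ⟨q, hq⟩ := hj
  set ζ : ℂ := Complex.exp (2 * Real.pi * Complex.I * (m : ℂ) / (b : ℂ) ^ (j + (t + 1)))
  have hbC : (b : ℂ) ≠ 0 := Nat.cast_ne_zero.mpr (by omega)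
  have hdC : (d : ℂ) ≠ 0 := Nat.cast_ne_zero.mpr (by omega)
  have hgC : (g : ℂ) ≠ 0 := Nat.cast_ne_zero.mpr (by omega)
  have hζpow : ζ ^ b ^ j = Complex.exp (2 * Real.pi * Complex.I * ((m₁ : ℂ) / (d : ℂ))) := by
    rw [← Complex.exp_nat_mul]
    congr 1
    have hmC : (m : ℂ) = (b : ℂ) ^ t * ((g : ℂ) * (m₁ : ℂ)) := by
      rw [hmeq, hm₁]; push_cast; ring
    have hbk : (b : ℂ) ^ (j + (t + 1)) = (b : ℂ) ^ j * ((b : ℂ) ^ t * ((g : ℂ) * (d : ℂ))) := by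
      rw [pow_add, pow_succ]
      have : (b : ℂ) = (g : ℂ) * (d : ℂ) := by rw [hdg]; push_cast; ring
      rw [this]
    rw [hmC, hbk]
    have hbtC : (b : ℂ) ^ t ≠ 0 := pow_ne_zero _ hbC
    have hbjC : (b : ℂ) ^ j ≠ 0 := pow_ne_zero _ hbC
    push_cast
    field_simp
  have hprim : IsPrimitiveRoot (ζ ^ b ^ j) d := by
    rw [hζpow]
    exact Complex.isPrimitiveRoot_exp_of_coprime m₁ d (by omega) hcop
  have hroot : (Polynomial.aeval (ζ ^ b ^ j)) (cyclotomic d ℤ) = 0 := by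
    have := hprim.isRoot_cyclotomic (show 0 < d by omega)
    rwa [aeval_def, eval₂_eq_eval_map, map_cyclotomic]
  rw [hq, map_mul]
  have : (Polynomial.aeval ζ) ((cyclotomic d ℤ).comp (X ^ b ^ j)) = 0 := by
    rw [aeval_comp]
    simpa using hroot
  rw [this, zero_mul]
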